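/- arXiv:2006.04635 — 5 statements merged into one kernel-verified Lean document; each statement's English description precedes it below -/
import Mathlib

section
/- Continuous-time fictitious play has bounded (O(1)) regret: let r : [0,∞) → ℝ^A be a bounded measurable reward stream on a finite action set A, and for t ≥ 1 let b_t ∈ argmax_{p} ⟨p, ∫_0^t r_s ds⟩ over probability distributions p, with b_t arbitrary measurable for t < 1. Then for all T ≥ 1, max_p ∫_0^T ⟨p, r_s⟩ ds − ∫_0^T ⟨b_s, r_s⟩ ds = max_p ∫_0^1 ⟨p, r_s⟩ ds − ∫_0^1 ⟨b_s, r_s⟩ ds, which is bounded independently of T. -/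
open Real BigOperators MeasureTheory intervalIntegral

def IsDist {A : Type*} [Fintype A] (p : A → ℝ) : Prop :=
  (∀ a, 0 ≤ p a) ∧ ∑ a, p a = 1

lemma cfp_intervalIntegrable (f : ℝ → ℝ) (hf : Measurable f) (M : ℝ)
    (hM : ∀ x, |f x| ≤ M) (u v : ℝ) : IntervalIntegrable f volume u v := by
  rw [intervalIntegrable_iff]
  have hconst : IntegrableOn (fun _ : ℝ => M) (Set.uIoc u v) volume :=
    integrableOn_const measure_Ioc_lt_top.ne
  refine hconst.mono' hf.aestronglyMeasurable.restrict (ae_of_all _ fun x => ?_)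
  simpa [Real.norm_eq_abs] using hM x

/-- Lebesgue differentiation for primitives of bounded measurable functions. -/
lemma cfp_primitive_hasDerivAt (f : ℝ → ℝ) (hf : Measurable f) (M : ℝ) (hM0 : 0 ≤ M)
    (hM : ∀ x, |f x| ≤ M) :
    ∀ᵐ x, HasDerivAt (fun t => ∫ s in (0:ℝ)..t, f s) (f x) x := by
  have hint : ∀ u v : ℝ, IntervalIntegrable f volume u v :=
    cfp_intervalIntegrable f hf M hM
  have hfM : Measurable fun s => f s + M := hf.add_const M
  have hfMnn : ∀ x, 0 ≤ f x + M := fun x => by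
    have := abs_le.1 (hM x); linarith [this.1]
  have hintM : ∀ u v : ℝ, IntervalIntegrable (fun s => f s + M) volume u v :=
    cfp_intervalIntegrable _ hfM (2 * M) (fun x => by
      have := abs_le.1 (hM x); rw [abs_of_nonneg (hfMnn x)]; linarith [this.2]) 
  set g : ℝ → ℝ := fun t => ∫ s in (0:ℝ)..t, (f s + M) with hg
  have hsub : ∀ u v : ℝ, g v - g u = ∫ s in u..v, (f s + M) := fun u v =>
    integral_interval_sub_left (hintM 0 v) (hintM 0 u)
  have hmono : Monotone g := by
    intro u v huv
    have h := hsub u v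
    have : (0:ℝ) ≤ ∫ s in u..v, (f s + M) :=
      intervalIntegral.integral_nonneg huv (fun x _ => hfMnn x)
    linarith
  have hcont : Continuous g := intervalIntegral.continuous_primitive hintM 0
  set S : StieltjesFunction ℝ := ⟨g, hmono, fun x => hcont.continuousAt.continuousWithinAt⟩
    with hS
  have hmeasEq : S.measure = volume.withDensity fun x => ENNReal.ofReal (f x + M) := by
    refine Measure.ext_of_Ioc _ _ fun u v huv => ?_
    rw [S.measure_Ioc, withDensity_apply _ measurableSet_Ioc]
    have hInt : IntegrableOn (fun s => f s + M) (Set.Ioc u v) volume := by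
      have := hintM u v
      rwa [intervalIntegrable_iff, Set.uIoc_of_le huv.le] at this
    rw [← ofReal_integral_eq_lintegral_ofReal hInt (ae_of_all _ fun x => hfMnn x)]
    congr 1
    have : S v - S u = ∫ s in u..v, (f s + M) := hsub u v
    rw [this, intervalIntegral.integral_of_le huv.le]
  have hrn : Measure.rnDeriv S.measure volume =ᵐ[volume]
      fun x => ENNReal.ofReal (f x + M) := by
    rw [hmeasEq]
    exact Measure.rnDeriv_withDensity volume (by measurability)
  have hgval : ∀ t, g t = (∫ s in (0:ℝ)..t, f s) + M * t := by
    intro t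
    show (∫ s in (0:ℝ)..t, (f s + M)) = _
    rw [intervalIntegral.integral_add (hint 0 t)
      (_root_.intervalIntegrable_const (c := M)),
      intervalIntegral.integral_const]
    simp [smul_eq_mul]
    ring
  filter_upwards [S.ae_hasDerivAt, hrn] with x hx hx2
  rw [hx2, ENNReal.toReal_ofReal (hfMnn x)] at hx
  have hgx : HasDerivAt g (f x + M) x := hx
  have h2 : HasDerivAt (fun t => g t - M * t) (f x + M - M * 1) x :=
    hgx.sub ((hasDerivAt_id x).const_mul M)
  have heq : (fun t => g t - M * t) = fun t => ∫ s in (0:ℝ)..t, f s := by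
    funext t; rw [hgval t]; ring
  rw [heq] at h2
  simpa using h2

/-- FTC-type lower bound for monotone continuous functions whose derivative, where it
exists on `(u, v]`, equals the constant `c`. -/
lemma cfp_monotone_ftc (g : ℝ → ℝ) (hmono : Monotone g) (hcont : Continuous g)
    {u v : ℝ} (huv : u ≤ v) (c : ℝ) (hc : 0 ≤ c)
    (h : ∀ᵐ x, x ∈ Set.Ioc u v → ∀ d, HasDerivAt g d x → d = c) :
    c * (v - u) ≤ g v - g u := by
  set S : StieltjesFunction ℝ := ⟨g, hmono, fun x => hcont.continuousAt.continuousWithinAt⟩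
    with hS
  have key : ∀ᵐ x, x ∈ Set.Ioc u v →
      Measure.rnDeriv S.measure volume x = ENNReal.ofReal c := by
    filter_upwards [S.ae_hasDerivAt, h, Measure.rnDeriv_lt_top S.measure volume]
      with x h1 h2 h3 hmem
    rw [← h2 hmem _ h1, ENNReal.ofReal_toReal h3.ne]
  have e1 : ∫⁻ x in Set.Ioc u v, Measure.rnDeriv S.measure volume x
      = ENNReal.ofReal c * volume (Set.Ioc u v) := by
    rw [setLIntegral_congr_fun_ae measurableSet_Ioc ?_]
    · exact setLIntegral_const _ _
    · filter_upwards [key] with x hx hmem; exact hx hmem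
  have e2 : ∫⁻ x in Set.Ioc u v, Measure.rnDeriv S.measure volume x
      ≤ S.measure (Set.Ioc u v) := by
    rw [← withDensity_apply _ measurableSet_Ioc]
    exact Measure.withDensity_rnDeriv_le _ _ _
  rw [e1, S.measure_Ioc, Real.volume_Ioc] at e2
  have hSv : S v - S u = g v - g u := rfl
  rw [hSv, ← ENNReal.ofReal_mul hc] at e2
  exact (ENNReal.ofReal_le_ofReal_iff (sub_nonneg.2 (hmono huv))).1 e2

/-- Continuous-time fictitious play has O(1) regret: the unregularized regret over `[0, T]`
equals the regret over `[0, 1]`, a quantity independent of `T`. -/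
theorem cfp_bounded_regret {A : Type*} [Fintype A] [Nonempty A]
    (r : ℝ → A → ℝ) (b : ℝ → A → ℝ)
    (hrmeas : ∀ a, Measurable (fun s => r s a))
    (hrbdd : ∃ M : ℝ, ∀ s a, |r s a| ≤ M)
    (hbmeas : ∀ a, Measurable (fun s => b s a))
    (hbdist : ∀ t, IsDist (b t))
    (hbr : ∀ t ≥ (1:ℝ), ∀ p : A → ℝ, IsDist p →
      ∑ a, p a * (∫ s in (0:ℝ)..t, r s a) ≤ ∑ a, b t a * (∫ s in (0:ℝ)..t, r s a)) :
    ∀ T ≥ (1:ℝ),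
      sSup {x : ℝ | ∃ p : A → ℝ, IsDist p ∧ x = ∫ s in (0:ℝ)..T, ∑ a, p a * r s a}
        - (∫ s in (0:ℝ)..T, ∑ a, b s a * r s a)
      = sSup {x : ℝ | ∃ p : A → ℝ, IsDist p ∧ x = ∫ s in (0:ℝ)..(1:ℝ), ∑ a, p a * r s a}
        - (∫ s in (0:ℝ)..(1:ℝ), ∑ a, b s a * r s a) := by
  classical
  obtain ⟨M₀, hM₀⟩ := hrbdd
  set M : ℝ := max M₀ 0 with hMdef
  have hM0 : 0 ≤ M := le_max_right _ _
  have hM : ∀ s a, |r s a| ≤ M := fun s a => (hM₀ s a).trans (le_max_left _ _)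
  set R : A → ℝ → ℝ := fun a t => ∫ s in (0:ℝ)..t, r s a with hRdef
  set ψ : ℝ → ℝ := fun s => ∑ a, b s a * r s a with hψdef
  set K : ℝ → ℝ := fun t => ∫ s in (0:ℝ)..t, ψ s with hKdef
  have hψmeas : Measurable ψ :=
    Finset.measurable_sum _ fun a _ => (hbmeas a).mul (hrmeas a)
  have hψbd : ∀ s, |ψ s| ≤ M := by
    intro s
    calc |ψ s| ≤ ∑ a, |b s a * r s a| := Finset.abs_sum_le_sum_abs _ _
      _ = ∑ a, b s a * |r s a| := by
          refine Finset.sum_congr rfl fun a _ => ?_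
          rw [abs_mul, abs_of_nonneg ((hbdist s).1 a)]
      _ ≤ ∑ a, b s a * M := Finset.sum_le_sum fun a _ =>
          mul_le_mul_of_nonneg_left (hM s a) ((hbdist s).1 a)
      _ = M := by rw [← Finset.sum_mul, (hbdist s).2, one_mul]
  have hintr : ∀ a (u v : ℝ), IntervalIntegrable (fun s => r s a) volume u v :=
    fun a u v => cfp_intervalIntegrable _ (hrmeas a) M (fun x => hM x a) u v
  have hintψ : ∀ u v : ℝ, IntervalIntegrable ψ volume u v :=
    fun u v => cfp_intervalIntegrable _ hψmeas M hψbd u v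
  -- the max function
  have hune : (Finset.univ : Finset A).Nonempty := Finset.univ_nonempty
  set F : ℝ → ℝ := fun t => Finset.univ.sup' hune fun a => R a t with hFdef
  have hRle : ∀ a t, R a t ≤ F t := fun a t =>
    Finset.le_sup' (fun a => R a t) (Finset.mem_univ a)
  -- difference bounds
  have hRsub : ∀ a (u v : ℝ), R a v - R a u = ∫ s in u..v, r s a := fun a u v =>
    integral_interval_sub_left (hintr a 0 v) (hintr a 0 u)
  have hKsub : ∀ u v : ℝ, K v - K u = ∫ s in u..v, ψ s := fun u v =>
    integral_interval_sub_left (hintψ 0 v) (hintψ 0 u)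
  have hboundr : ∀ a (u v : ℝ), |R a v - R a u| ≤ M * |v - u| := by
    intro a u v
    rw [hRsub]
    simpa [Real.norm_eq_abs] using
      intervalIntegral.norm_integral_le_of_norm_le_const
        (C := M) (f := fun s => r s a) (a := u) (b := v)
        (fun x _ => by simpa [Real.norm_eq_abs] using hM x a)
  have hboundψ : ∀ u v : ℝ, |K v - K u| ≤ M * |v - u| := by
    intro u v
    rw [hKsub]
    simpa [Real.norm_eq_abs] using
      intervalIntegral.norm_integral_le_of_norm_le_const
        (C := M) (f := ψ) (a := u) (b := v)
        (fun x _ => by simpa [Real.norm_eq_abs] using hψbd x)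
  have hboundF : ∀ u v : ℝ, u ≤ v → |F v - F u| ≤ M * (v - u) := by
    intro u v huv
    rw [abs_le]
    constructor
    · -- F u - F v ≤ M (v - u)
      have : F u ≤ F v + M * (v - u) := by
        refine Finset.sup'_le _ _ fun a _ => ?_
        have h1 := (abs_le.1 (hboundr a u v)).1
        have h2 := hRle a v
        rw [abs_of_nonneg (by linarith : (0:ℝ) ≤ v - u)] at h1
        linarith
      linarith
    · have : F v ≤ F u + M * (v - u) := by
        refine Finset.sup'_le _ _ fun a _ => ?_
        have h1 := (abs_le.1 (hboundr a u v)).2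
        have h2 := hRle a u
        rw [abs_of_nonneg (by linarith : (0:ℝ) ≤ v - u)] at h1
        linarith
      linarith
  -- F at times ≥ 1
  have hdirac : ∀ a : A, IsDist (fun a' => if a' = a then (1:ℝ) else 0) := by
    intro a
    constructor
    · intro a'; by_cases h : a' = a <;> simp [h]
    · simp
  have hFb : ∀ t, 1 ≤ t → F t = ∑ a, b t a * R a t := by
    intro t ht
    apply le_antisymm
    · refine Finset.sup'_le _ _ fun a _ => ?_
      have := hbr t ht (fun a' => if a' = a then (1:ℝ) else 0) (hdirac a)
      simpa [Finset.sum_ite_eq'] using this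
    · calc ∑ a, b t a * R a t ≤ ∑ a, b t a * F t :=
            Finset.sum_le_sum fun a _ =>
              mul_le_mul_of_nonneg_left (hRle a t) ((hbdist t).1 a)
        _ = F t := by rw [← Finset.sum_mul, (hbdist t).2, one_mul]
  -- a.e. derivatives
  have hR' : ∀ᵐ x, ∀ a, HasDerivAt (R a) (r x a) x :=
    ae_all_iff.2 fun a =>
      cfp_primitive_hasDerivAt _ (hrmeas a) M hM0 (fun x => hM x a)
  have hK' : ∀ᵐ x, HasDerivAt K (ψ x) x :=
    cfp_primitive_hasDerivAt _ hψmeas M hM0 hψbd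
  -- key derivative identification at points ≥ 1
  have hFderiv : ∀ᵐ x, (1:ℝ) ≤ x → ∀ D, HasDerivAt F D x → D = ψ x := by
    filter_upwards [hR'] with x hRx hx1 D hD
    have hsum : ∑ a, b x a * (F x - R a x) = 0 := by
      have h1 : ∑ a, b x a * (F x - R a x)
          = (∑ a, b x a) * F x - ∑ a, b x a * R a x := by
        rw [Finset.sum_mul]
        rw [← Finset.sum_sub_distrib]
        refine Finset.sum_congr rfl fun a _ => by ring
      rw [h1, (hbdist x).2, one_mul, ← hFb x hx1, sub_self]
    have hzero : ∀ a ∈ Finset.univ, b x a * (F x - R a x) = 0 :=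
      (Finset.sum_eq_zero_iff_of_nonneg fun a _ =>
        mul_nonneg ((hbdist x).1 a) (sub_nonneg.2 (hRle a x))).1 hsum
    have hDa : ∀ a, b x a ≠ 0 → D = r x a := by
      intro a ha
      have hFR : F x = R a x := by
        have := hzero a (Finset.mem_univ a)
        rcases mul_eq_zero.1 this with h | h
        · exact absurd h ha
        · linarith [sub_eq_zero.1 h]
      have hmin : IsLocalMin (fun t => F t - R a t) x := by
        refine Filter.Eventually.of_forall fun y => ?_
        have := hRle a y
        simp only [hFR]
        linarith
      have hz := hmin.hasDerivAt_eq_zero (hD.sub (hRx a))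
      linarith
    have hψx : ψ x = ∑ a, b x a * D := by
      refine Finset.sum_congr rfl fun a _ => ?_
      by_cases h : b x a = 0
      · simp [h]
      · rw [hDa a h]
    rw [← Finset.sum_mul, (hbdist x).2, one_mul] at hψx
    exact hψx.symm
  intro T hT
  -- the two monotone functions
  set g₁ : ℝ → ℝ := fun t => F t - K t + 2 * M * t with hg₁
  set g₂ : ℝ → ℝ := fun t => K t - F t + 2 * M * t with hg₂
  have hg₁mono : Monotone g₁ := by
    intro u v huv
    have h1 := (abs_le.1 (hboundF u v huv)).1
    have h2 := (abs_le.1 (hboundψ u v)).2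
    rw [abs_of_nonneg (by linarith : (0:ℝ) ≤ v - u)] at h2
    simp only [hg₁]
    nlinarith
  have hg₂mono : Monotone g₂ := by
    intro u v huv
    have h1 := (abs_le.1 (hboundF u v huv)).2
    have h2 := (abs_le.1 (hboundψ u v)).1
    rw [abs_of_nonneg (by linarith : (0:ℝ) ≤ v - u)] at h2
    simp only [hg₂]
    nlinarith
  have hFcont : Continuous F := by
    rw [Metric.continuous_iff]
    intro x ε hε
    refine ⟨ε / (M + 1), by positivity, fun y hy => ?_⟩
    have hd : |F y - F x| ≤ M * |y - x| := by
      rcases le_total x y with h | h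
      · simpa [abs_of_nonneg (sub_nonneg.2 h)] using hboundF x y h
      · have h2 := hboundF y x h
        rw [abs_sub_comm, abs_sub_comm y x, abs_of_nonneg (sub_nonneg.2 h)]
        exact h2
    rw [Real.dist_eq] at hy ⊢
    calc |F y - F x| ≤ M * |y - x| := hd
      _ ≤ M * (ε / (M + 1)) := by
          exact mul_le_mul_of_nonneg_left hy.le hM0
      _ < ε := by
          rw [mul_div_assoc']
          rw [div_lt_iff₀ (by linarith)]
          nlinarith
  have hKcont : Continuous K := intervalIntegral.continuous_primitive hintψ 0
  have hg₁cont : Continuous g₁ := by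
    apply Continuous.add (hFcont.sub hKcont)
    exact (continuous_const.mul continuous_id)
  have hg₂cont : Continuous g₂ := by
    apply Continuous.add (hKcont.sub hFcont)
    exact (continuous_const.mul continuous_id)
  have hder : ∀ᵐ x, x ∈ Set.Ioc (1:ℝ) T →
      (∀ d, HasDerivAt g₁ d x → d = 2 * M) ∧
      (∀ d, HasDerivAt g₂ d x → d = 2 * M) := by
    filter_upwards [hK', hFderiv] with x hKx hFx hmem
    have hx1 : (1:ℝ) ≤ x := hmem.1.le
    constructor
    · intro d hd
      have hF : HasDerivAt F (d + ψ x - 2 * M * 1) x := by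
        have : F = fun t => g₁ t + K t - 2 * M * t := by
          funext t; simp only [hg₁]; ring
        rw [this]
        exact (hd.add hKx).sub ((hasDerivAt_id x).const_mul (2 * M))
      have := hFx hx1 _ hF
      linarith
    · intro d hd
      have hF : HasDerivAt F (ψ x - d + 2 * M * 1) x := by
        have : F = fun t => K t - g₂ t + 2 * M * t := by
          funext t; simp only [hg₂]; ring
        rw [this]
        exact (hKx.sub hd).add ((hasDerivAt_id x).const_mul (2 * M))
      have := hFx hx1 _ hF
      linarith
  have h2M : (0:ℝ) ≤ 2 * M := by linarith
  have hineq₁ : 2 * M * (T - 1) ≤ g₁ T - g₁ 1 :=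
    cfp_monotone_ftc g₁ hg₁mono hg₁cont hT (2 * M) h2M
      (hder.mono fun x hx hmem => (hx hmem).1)
  have hineq₂ : 2 * M * (T - 1) ≤ g₂ T - g₂ 1 :=
    cfp_monotone_ftc g₂ hg₂mono hg₂cont hT (2 * M) h2M
      (hder.mono fun x hx hmem => (hx hmem).2)
  have hFK : F T - K T = F 1 - K 1 := by
    simp only [hg₁] at hineq₁
    simp only [hg₂] at hineq₂
    nlinarith
  -- identify the sSup terms
  have hsSup : ∀ t, 1 ≤ t →
      sSup {x : ℝ | ∃ p : A → ℝ, IsDist p ∧ x = ∫ s in (0:ℝ)..t, ∑ a, p a * r s a}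
        = ∑ a, b t a * R a t := by
    intro t ht
    have hval : ∀ p : A → ℝ,
        (∫ s in (0:ℝ)..t, ∑ a, p a * r s a) = ∑ a, p a * R a t := by
      intro p
      rw [intervalIntegral.integral_finset_sum (fun a _ =>
        (hintr a 0 t).const_mul (p a))]
      exact Finset.sum_congr rfl fun a _ =>
        intervalIntegral.integral_const_mul (p a) _
    refine IsGreatest.csSup_eq ⟨⟨b t, hbdist t, ?_⟩, ?_⟩
    · rw [hval]
    · rintro x ⟨p, hp, rfl⟩
      rw [hval]
      exact hbr t ht p hp
  have hKT : (∫ s in (0:ℝ)..T, ∑ a, b s a * r s a) = K T := rfl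
  have hK1 : (∫ s in (0:ℝ)..(1:ℝ), ∑ a, b s a * r s a) = K 1 := rfl
  rw [hsSup T hT, hsSup 1 le_rfl, hKT, hK1, ← hFb T hT, ← hFb 1 le_rfl]
  linarith
end

section
/- Derivative of the running maximum payoff: let r : [0,∞) → ℝ^A be a continuous bounded reward stream on a finite set A, and define M(t) = max_p ⟨p, ∫_0^t r_s ds⟩ over probability distributions p. Then wherever M is differentiable (almost every t), M'(t) = ⟨b_t, r_t⟩ for any maximizer b_t of ⟨p, ∫_0^t r_s ds⟩. -/
open Real BigOperators MeasureTheory intervalIntegral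

/-- Envelope theorem for the running maximum payoff of continuous-time fictitious play:
wherever `M` is differentiable, its derivative is `⟨b_t, r_t⟩` for any maximizer `b_t`. -/
theorem envelope_running_max {A : Type*} [Fintype A] [Nonempty A]
    (r : ℝ → A → ℝ)
    (hrcont : ∀ a, Continuous (fun s => r s a))
    (hrbdd : ∃ M : ℝ, ∀ s a, |r s a| ≤ M)
    (M : ℝ → ℝ)
    (hM : ∀ t, M t = sSup {x : ℝ | ∃ p : A → ℝ, IsDist p ∧
      x = ∑ a, p a * (∫ s in (0:ℝ)..t, r s a)}) :
    ∀ t ≥ (0:ℝ), ∀ d : ℝ, HasDerivAt M d t →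
      ∀ bt : A → ℝ, IsDist bt →
        (∀ p : A → ℝ, IsDist p →
          ∑ a, p a * (∫ s in (0:ℝ)..t, r s a) ≤ ∑ a, bt a * (∫ s in (0:ℝ)..t, r s a)) →
        d = ∑ a, bt a * r t a := by
  intro t ht d hd bt hbt hmax
  set φ : ℝ → ℝ := fun u => ∑ a, bt a * ∫ s in (0:ℝ)..u, r s a with hφdef
  have hφd : HasDerivAt φ (∑ a, bt a * r t a) t := by
    apply HasDerivAt.fun_sum
    intro a _
    exact (((hrcont a).integral_hasStrictDerivAt 0 t).hasDerivAt).const_mul (bt a)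
  have hbdd : ∀ u : ℝ, BddAbove {x : ℝ | ∃ p : A → ℝ, IsDist p ∧
      x = ∑ a, p a * (∫ s in (0:ℝ)..u, r s a)} := by
    intro u
    refine ⟨Finset.univ.sup' Finset.univ_nonempty (fun a => ∫ s in (0:ℝ)..u, r s a), ?_⟩
    rintro x ⟨p, hp, rfl⟩
    calc ∑ a, p a * (∫ s in (0:ℝ)..u, r s a)
        ≤ ∑ a, p a * Finset.univ.sup' Finset.univ_nonempty
            (fun a => ∫ s in (0:ℝ)..u, r s a) := by
          refine Finset.sum_le_sum fun a _ => ?_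
          exact mul_le_mul_of_nonneg_left
            (Finset.le_sup' (fun a => ∫ s in (0:ℝ)..u, r s a) (Finset.mem_univ a)) (hp.1 a)
      _ = _ := by rw [← Finset.sum_mul, hp.2, one_mul]
  have hφle : ∀ u : ℝ, φ u ≤ M u := by
    intro u
    rw [hM u]
    exact le_csSup (hbdd u) ⟨bt, hbt, rfl⟩
  have hφt : φ t = M t := by
    rw [hM t]
    have hg : IsGreatest {x : ℝ | ∃ p : A → ℝ, IsDist p ∧
        x = ∑ a, p a * (∫ s in (0:ℝ)..t, r s a)}
        (∑ a, bt a * (∫ s in (0:ℝ)..t, r s a)) := by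
      refine ⟨⟨bt, hbt, rfl⟩, ?_⟩
      rintro x ⟨p, hp, rfl⟩
      exact hmax p hp
    exact hg.csSup_eq.symm
  have hmin : IsLocalMin (fun u => M u - φ u) t :=
    Filter.Eventually.of_forall fun u => by
      simp only [hφt]
      linarith [hφle u]
  have := hmin.hasDerivAt_eq_zero (hd.sub hφd)
  linarith [this]
end

section
/- Derivative of the entropy-regularized running maximum: let r : [0,∞) → ℝ^A be continuous and bounded, λ > 0, and define G(t) = max_p ∫_0^t (⟨p, r_s⟩ + λ·H(p)) ds = max_p (⟨p, ∫_0^t r_s ds⟩ + t·λ·H(p)). Then for t > 0, G is differentiable with G'(t) = ⟨b_t, r_t⟩ + λ·H(b_t), where b_t is the (unique) maximizer of ⟨p, (1/t)∫_0^t r_s ds⟩ + λ·H(p). -/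
open Real BigOperators MeasureTheory intervalIntegral

noncomputable def entropy {A : Type*} [Fintype A] (p : A → ℝ) : ℝ :=
  -∑ a, p a * Real.log (p a)

noncomputable def softmax {A : Type*} [Fintype A] (y : A → ℝ) : A → ℝ :=
  fun a => Real.exp (y a) / ∑ b, Real.exp (y b)

lemma sum_exp_pos {A : Type*} [Fintype A] [Nonempty A] (z : A → ℝ) :
    0 < ∑ a, Real.exp (z a) :=
  Finset.sum_pos (fun a _ => Real.exp_pos _) Finset.univ_nonempty

lemma softmax_isDist {A : Type*} [Fintype A] [Nonempty A] (y : A → ℝ) :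
    IsDist (softmax y) := by
  refine ⟨fun a => div_nonneg (Real.exp_pos _).le (sum_exp_pos y).le, ?_⟩
  simp only [softmax]
  rw [← Finset.sum_div, div_self (sum_exp_pos y).ne']

lemma log_softmax {A : Type*} [Fintype A] [Nonempty A] (y : A → ℝ) (a : A) :
    Real.log (softmax y a) = y a - Real.log (∑ b, Real.exp (y b)) := by
  simp only [softmax]
  rw [Real.log_div (Real.exp_ne_zero _) (sum_exp_pos y).ne', Real.log_exp]

lemma gibbs_le {A : Type*} [Fintype A] [Nonempty A] (y : A → ℝ) (c : ℝ) (hc : 0 < c)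
    (p : A → ℝ) (hp : IsDist p) :
    (∑ a, p a * y a) + c * entropy p ≤ c * Real.log (∑ a, Real.exp (y a / c)) := by
  set S := ∑ a, Real.exp (y a / c) with hSdef
  have hS : 0 < S := sum_exp_pos _
  have key : ∀ a, p a * y a - c * (p a * Real.log (p a)) ≤
      c * (p a * Real.log S + Real.exp (y a / c) / S - p a) := by
    intro a
    rcases eq_or_lt_of_le (hp.1 a) with h0 | hpos
    · rw [← h0]
      simp
      positivity
    · have hq : 0 < Real.exp (y a / c) / S := div_pos (Real.exp_pos _) hS
      have hlog : Real.log (Real.exp (y a / c) / S / p a) ≤ Real.exp (y a / c) / S / p a - 1 :=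
        Real.log_le_sub_one_of_pos (div_pos hq hpos)
      rw [Real.log_div hq.ne' hpos.ne', Real.log_div (Real.exp_ne_zero _) hS.ne',
        Real.log_exp] at hlog
      have h2 : p a * (y a / c - Real.log S - Real.log (p a)) ≤
          Real.exp (y a / c) / S - p a := by
        have h1 := mul_le_mul_of_nonneg_left hlog (le_of_lt hpos)
        have h2' : p a * (Real.exp (y a / c) / S / p a - 1) =
            Real.exp (y a / c) / S - p a := by
          field_simp
        linarith [h1, h2'.le, h2'.ge]
      have h3 := mul_le_mul_of_nonneg_left h2 hc.le
      have h4 : c * (p a * (y a / c - Real.log S - Real.log (p a))) =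
          p a * y a - c * (p a * Real.log S) - c * (p a * Real.log (p a)) := by
        field_simp
      rw [h4] at h3
      linarith [h3]
  calc (∑ a, p a * y a) + c * entropy p
      = ∑ a, (p a * y a - c * (p a * Real.log (p a))) := by
        simp only [entropy, mul_neg, Finset.mul_sum]
        rw [Finset.sum_sub_distrib]
        ring
    _ ≤ ∑ a, c * (p a * Real.log S + Real.exp (y a / c) / S - p a) :=
        Finset.sum_le_sum fun a _ => key a
    _ = c * Real.log S := by
        rw [← Finset.mul_sum]
        congr 1
        rw [Finset.sum_sub_distrib, Finset.sum_add_distrib, ← Finset.sum_mul,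
          ← Finset.sum_div, hp.2, div_self hS.ne']
        ring

lemma softmax_value {A : Type*} [Fintype A] [Nonempty A] (y : A → ℝ) (c : ℝ) (hc : 0 < c) :
    (∑ a, softmax (fun a => y a / c) a * y a) + c * entropy (softmax (fun a => y a / c)) =
      c * Real.log (∑ a, Real.exp (y a / c)) := by
  set q := softmax (fun a => y a / c) with hq
  set S := ∑ a, Real.exp (y a / c) with hSdef
  have hS : 0 < S := sum_exp_pos _
  have hq1 : ∑ a, q a = 1 := (softmax_isDist _).2
  have hlogsum : ∑ a, q a * Real.log (q a) = (∑ a, q a * y a) / c - Real.log S := by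
    calc ∑ a, q a * Real.log (q a)
        = ∑ a, (q a * y a / c - q a * Real.log S) := by
          refine Finset.sum_congr rfl fun a _ => ?_
          rw [hq, log_softmax]
          ring
      _ = (∑ a, q a * y a) / c - (∑ a, q a) * Real.log S := by
          rw [Finset.sum_sub_distrib, ← Finset.sum_div, ← Finset.sum_mul]
      _ = (∑ a, q a * y a) / c - Real.log S := by rw [hq1, one_mul]
  simp only [entropy]
  rw [hlogsum]
  field_simp
  ring

lemma sup_eq_logsumexp {A : Type*} [Fintype A] [Nonempty A] (y : A → ℝ) (c : ℝ) (hc : 0 < c) :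
    sSup {x : ℝ | ∃ p : A → ℝ, IsDist p ∧ x = (∑ a, p a * y a) + c * entropy p} =
      c * Real.log (∑ a, Real.exp (y a / c)) := by
  apply le_antisymm
  · apply csSup_le
    · exact ⟨_, softmax (fun a => y a / c), softmax_isDist _, rfl⟩
    · rintro x ⟨p, hp, rfl⟩
      exact gibbs_le y c hc p hp
  · apply le_csSup
    · exact ⟨c * Real.log (∑ a, Real.exp (y a / c)), by
        rintro x ⟨p, hp, rfl⟩; exact gibbs_le y c hc p hp⟩
    · exact ⟨softmax (fun a => y a / c), softmax_isDist _, (softmax_value y c hc).symm⟩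

lemma deriv_algebra {A : Type*} [Fintype A] [Nonempty A] (R f : A → ℝ) (lam c : ℝ)
    (hc : c ≠ 0) :
    lam * Real.log (∑ a, Real.exp (f a / c)) +
      c * ((∑ a, Real.exp (f a / c) * ((R a * c - f a * lam) / c ^ 2)) /
        (∑ a, Real.exp (f a / c))) =
    (∑ a, Real.exp (f a / c) / (∑ a', Real.exp (f a' / c)) * R a) +
      lam * (-(∑ a, Real.exp (f a / c) / (∑ a', Real.exp (f a' / c)) *
        (f a / c - Real.log (∑ a', Real.exp (f a' / c))))) := by
  set S := ∑ a, Real.exp (f a / c) with hSdef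
  have hS : 0 < S := sum_exp_pos _
  have h1 : ∑ a, Real.exp (f a / c) * ((R a * c - f a * lam) / c ^ 2) =
      (c * (∑ a, Real.exp (f a / c) * R a) - lam * (∑ a, Real.exp (f a / c) * f a)) / c ^ 2 := by
    rw [Finset.mul_sum, Finset.mul_sum, ← Finset.sum_sub_distrib, Finset.sum_div]
    exact Finset.sum_congr rfl fun a _ => by ring
  have h2 : ∑ a, Real.exp (f a / c) / S * R a = (∑ a, Real.exp (f a / c) * R a) / S := by
    rw [Finset.sum_div]
    exact Finset.sum_congr rfl fun a _ => by ring
  have h3 : ∑ a, Real.exp (f a / c) / S * (f a / c - Real.log S) =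
      (∑ a, Real.exp (f a / c) * f a) / (S * c) - Real.log S := by
    have : ∀ a, Real.exp (f a / c) / S * (f a / c - Real.log S) =
        Real.exp (f a / c) * f a / (S * c) - Real.exp (f a / c) / S * Real.log S := by
      intro a; field_simp
    rw [Finset.sum_congr rfl fun a _ => this a, Finset.sum_sub_distrib, ← Finset.sum_div,
      ← Finset.sum_mul, ← Finset.sum_div, ← hSdef, div_self hS.ne', one_mul]
  rw [h1, h2, h3]
  field_simp
  ring

/-- Derivative of the entropy-regularized running maximum: for `t > 0`,
`G'(t) = ⟨b_t, r_t⟩ + λ H(b_t)` where `b_t = softmax((1/(λ t)) ∫_0^t r)` is the unique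
maximizer of `⟨p, (1/t)∫_0^t r⟩ + λ H(p)`. -/
theorem deriv_entropy_regularized_running_max {A : Type*} [Fintype A] [Nonempty A]
    (r : ℝ → A → ℝ)
    (hrcont : ∀ a, Continuous (fun s => r s a))
    (hrbdd : ∃ M : ℝ, ∀ s a, |r s a| ≤ M)
    (lam : ℝ) (hlam : 0 < lam)
    (G : ℝ → ℝ)
    (hG : ∀ t, G t = sSup {x : ℝ | ∃ p : A → ℝ, IsDist p ∧
      x = (∑ a, p a * (∫ s in (0:ℝ)..t, r s a)) + t * lam * entropy p})
    (b : ℝ → A → ℝ)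
    (hb : ∀ t, b t = softmax (fun a => (1 / (lam * t)) * ∫ s in (0:ℝ)..t, r s a)) :
    ∀ t > (0:ℝ),
      (∀ p : A → ℝ, IsDist p →
        (∑ a, p a * ((1/t) * ∫ s in (0:ℝ)..t, r s a)) + lam * entropy p ≤
        (∑ a, b t a * ((1/t) * ∫ s in (0:ℝ)..t, r s a)) + lam * entropy (b t)) ∧
      HasDerivAt G ((∑ a, b t a * r t a) + lam * entropy (b t)) t := by
  intro t ht
  have htne : t ≠ 0 := ht.ne'
  have hc : 0 < t * lam := mul_pos ht hlam
  constructor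
  · intro p hp
    have hbt : b t = softmax (fun a => ((1/t) * ∫ s in (0:ℝ)..t, r s a) / lam) := by
      rw [hb t]
      have : (fun a => 1 / (lam * t) * ∫ s in (0:ℝ)..t, r s a) =
          (fun a => ((1/t) * ∫ s in (0:ℝ)..t, r s a) / lam) := funext fun a => by ring
      rw [this]
    have h1 := gibbs_le (fun a => (1/t) * ∫ s in (0:ℝ)..t, r s a) lam hlam p hp
    have h2 := softmax_value (fun a => (1/t) * ∫ s in (0:ℝ)..t, r s a) lam hlam
    rw [hbt]
    calc (∑ a, p a * ((1/t) * ∫ s in (0:ℝ)..t, r s a)) + lam * entropy p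
        ≤ lam * Real.log (∑ a, Real.exp (((1/t) * ∫ s in (0:ℝ)..t, r s a) / lam)) := h1
      _ = _ := h2.symm
  · -- derivative part
    have hbt2 : b t = softmax (fun a => (∫ s in (0:ℝ)..t, r s a) / (t * lam)) := by
      rw [hb t]
      have : (fun a => 1 / (lam * t) * ∫ s in (0:ℝ)..t, r s a) =
          (fun a => (∫ s in (0:ℝ)..t, r s a) / (t * lam)) := funext fun a => by ring
      rw [this]
    have hGeq : ∀ u ∈ Set.Ioi (0:ℝ), G u =
        u * lam * Real.log (∑ a, Real.exp ((∫ s in (0:ℝ)..u, r s a) / (u * lam))) := by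
      intro u hu
      rw [hG u]
      exact sup_eq_logsumexp _ _ (mul_pos hu hlam)
    have hF : ∀ a, HasDerivAt (fun u => ∫ s in (0:ℝ)..u, r s a) (r t a) t := fun a =>
      intervalIntegral.integral_hasDerivAt_right ((hrcont a).intervalIntegrable _ _)
        ((hrcont a).stronglyMeasurableAtFilter _ _) (hrcont a).continuousAt
    have hden : HasDerivAt (fun u : ℝ => u * lam) lam t := by
      simpa using (hasDerivAt_id t).mul_const lam
    have hu : ∀ a, HasDerivAt (fun u => (∫ s in (0:ℝ)..u, r s a) / (u * lam))
        ((r t a * (t * lam) - (∫ s in (0:ℝ)..t, r s a) * lam) / (t * lam) ^ 2) t :=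
      fun a => (hF a).div hden hc.ne'
    have hSd : HasDerivAt (fun u => ∑ a, Real.exp ((∫ s in (0:ℝ)..u, r s a) / (u * lam)))
        (∑ a, Real.exp ((∫ s in (0:ℝ)..t, r s a) / (t * lam)) *
          ((r t a * (t * lam) - (∫ s in (0:ℝ)..t, r s a) * lam) / (t * lam) ^ 2)) t :=
      HasDerivAt.fun_sum fun a _ => (hu a).exp
    have hSpos : 0 < ∑ a, Real.exp ((∫ s in (0:ℝ)..t, r s a) / (t * lam)) :=
      sum_exp_pos _
    have hlog := hSd.log hSpos.ne'
    have hphi := hden.mul hlog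
    have hval : lam * Real.log (∑ a, Real.exp ((∫ s in (0:ℝ)..t, r s a) / (t * lam))) +
        t * lam * ((∑ a, Real.exp ((∫ s in (0:ℝ)..t, r s a) / (t * lam)) *
          ((r t a * (t * lam) - (∫ s in (0:ℝ)..t, r s a) * lam) / (t * lam) ^ 2)) /
          (∑ a, Real.exp ((∫ s in (0:ℝ)..t, r s a) / (t * lam)))) =
        (∑ a, b t a * r t a) + lam * entropy (b t) := by
      rw [hbt2]
      simp only [entropy]
      simp_rw [log_softmax]
      simp only [softmax]
      exact deriv_algebra (fun a => r t a) (fun a => ∫ s in (0:ℝ)..t, r s a) lam (t*lam)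
        hc.ne'
    have hphi' : HasDerivAt
        (fun u => u * lam * Real.log (∑ a, Real.exp ((∫ s in (0:ℝ)..u, r s a) / (u * lam))))
        ((∑ a, b t a * r t a) + lam * entropy (b t)) t := hval ▸ hphi
    exact hphi'.congr_of_eventuallyEq
      (Filter.eventuallyEq_of_mem (Ioi_mem_nhds ht) hGeq)
end

section
/- Bounded regret of continuous-time stochastic fictitious play with respect to regularized payoffs: with A finite, λ > 0, r : [0,∞) → ℝ^A continuous bounded, and b_t = argmax_p (⟨p, (1/t)∫_0^t r_s ds⟩ + λ·H(p)) for t ≥ 1 (b_t measurable arbitrary for t < 1), for all T ≥ 1: max_p ∫_0^T (⟨p, r_s⟩ + λ H(p)) ds − ∫_0^T (⟨b_s, r_s⟩ + λ H(b_s)) ds = max_p ∫_0^1 (⟨p, r_s⟩ + λ H(p)) ds − ∫_0^1 (⟨b_s, r_s⟩ + λ H(b_s)) ds, a quantity bounded independently of T. -/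
open Real BigOperators MeasureTheory intervalIntegral

set_option linter.unusedSectionVars false
set_option linter.unusedVariables false

section Gibbs
variable {A : Type*} [Fintype A] [Nonempty A]

noncomputable def sm (lam : ℝ) (v : A → ℝ) : A → ℝ :=
  fun a => Real.exp (v a / lam) / ∑ c, Real.exp (v c / lam)

noncomputable def val (lam : ℝ) (v p : A → ℝ) : ℝ := (∑ a, p a * v a) + lam * entropy p

lemma Spos (lam : ℝ) (v : A → ℝ) : 0 < ∑ c, Real.exp (v c / lam) :=
  Finset.sum_pos (fun _ _ => Real.exp_pos _) Finset.univ_nonempty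

lemma sm_pos (lam : ℝ) (v : A → ℝ) (a : A) : 0 < sm lam v a :=
  div_pos (Real.exp_pos _) (Spos lam v)

lemma sm_dist (lam : ℝ) (v : A → ℝ) : IsDist (sm lam v) := by
  refine ⟨fun a => (sm_pos lam v a).le, ?_⟩
  unfold sm
  rw [← Finset.sum_div, div_self (Spos lam v).ne']

lemma log_sm (lam : ℝ) (v : A → ℝ) (a : A) :
    Real.log (sm lam v a) = v a / lam - Real.log (∑ c, Real.exp (v c / lam)) := by
  unfold sm
  rw [Real.log_div (Real.exp_pos _).ne' (Spos lam v).ne', Real.log_exp]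

lemma val_sm (lam : ℝ) (hlam : 0 < lam) (v : A → ℝ) :
    val lam v (sm lam v) = lam * Real.log (∑ c, Real.exp (v c / lam)) := by
  have hd := (sm_dist lam v).2
  unfold val entropy
  have e1 : ∀ a ∈ (Finset.univ : Finset A), sm lam v a * Real.log (sm lam v a)
      = sm lam v a * v a / lam - Real.log (∑ c, Real.exp (v c / lam)) * sm lam v a := by
    intro a _; rw [log_sm]; ring
  rw [Finset.sum_congr rfl e1, Finset.sum_sub_distrib, ← Finset.sum_div,
    ← Finset.mul_sum, hd]
  field_simp
  ring

lemma val_lt_sm (lam : ℝ) (hlam : 0 < lam) (v : A → ℝ) {p : A → ℝ}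
    (hp : IsDist p) (hne : p ≠ sm lam v) :
    val lam v p < val lam v (sm lam v) := by
  set q := sm lam v with hq
  set S := ∑ c, Real.exp (v c / lam) with hS
  -- val p = lam * log S + lam * ∑ p a * (log (q a) - log (p a))
  have hval : val lam v p
      = lam * Real.log S + lam * ∑ a, p a * (Real.log (q a) - Real.log (p a)) := by
    unfold val entropy
    have e1 : ∀ a ∈ (Finset.univ : Finset A), p a * (Real.log (q a) - Real.log (p a))
        = p a * v a / lam - Real.log S * p a - p a * Real.log (p a) := by
      intro a _; rw [hq, log_sm, ← hS]; ring
    rw [Finset.sum_congr rfl e1, Finset.sum_sub_distrib, Finset.sum_sub_distrib,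
      ← Finset.sum_div, ← Finset.mul_sum, hp.2]
    field_simp
    ring
  rw [hval, val_sm lam hlam v, ← hS]
  have key : ∑ a, p a * (Real.log (q a) - Real.log (p a)) < 0 := by
    obtain ⟨a₀, ha₀⟩ := Function.ne_iff.mp hne
    have hle : ∀ a ∈ Finset.univ, p a * (Real.log (q a) - Real.log (p a)) ≤ q a - p a := by
      intro a _
      rcases eq_or_lt_of_le (hp.1 a) with h0 | hpos
      · rw [← h0]; simpa using (sm_pos lam v a).le
      · rw [← Real.log_div (sm_pos lam v a).ne' hpos.ne']
        calc p a * Real.log (q a / p a) ≤ p a * (q a / p a - 1) := by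
              exact mul_le_mul_of_nonneg_left (Real.log_le_sub_one_of_pos
                (div_pos (sm_pos lam v a) hpos)) (hp.1 a)
          _ = q a - p a := by field_simp
    have hlt : p a₀ * (Real.log (q a₀) - Real.log (p a₀)) < q a₀ - p a₀ := by
      rcases eq_or_lt_of_le (hp.1 a₀) with h0 | hpos
      · rw [← h0]; simpa using (sm_pos lam v a₀)
      · rw [← Real.log_div (sm_pos lam v a₀).ne' hpos.ne']
        calc p a₀ * Real.log (q a₀ / p a₀) < p a₀ * (q a₀ / p a₀ - 1) := by
              refine mul_lt_mul_of_pos_left (Real.log_lt_sub_one_of_pos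
                (div_pos (sm_pos lam v a₀) hpos) ?_) hpos
              intro h
              rw [div_eq_one_iff_eq hpos.ne'] at h
              exact ha₀ h.symm
          _ = q a₀ - p a₀ := by field_simp
    have := Finset.sum_lt_sum hle ⟨a₀, Finset.mem_univ a₀, hlt⟩
    have hsum : ∑ a, (q a - p a) = 0 := by
      rw [Finset.sum_sub_distrib, (sm_dist lam v).2, hp.2]; ring
    linarith
  nlinarith

lemma eq_sm_of_max (lam : ℝ) (hlam : 0 < lam) (v : A → ℝ) {p : A → ℝ}
    (hp : IsDist p) (h : val lam v (sm lam v) ≤ val lam v p) : p = sm lam v := by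
  by_contra hne
  exact absurd h (not_le.mpr (val_lt_sm lam hlam v hp hne))

end Gibbs

section Deriv
variable {A : Type*} [Fintype A] [Nonempty A]

noncomputable def cInt (r : ℝ → A → ℝ) (t : ℝ) (a : A) : ℝ := ∫ s in (0:ℝ)..t, r s a

noncomputable def gfun (lam : ℝ) (r : ℝ → A → ℝ) (t : ℝ) : ℝ :=
  ∑ a, sm lam (fun a => cInt r t a / t) a * r t a
    + lam * entropy (sm lam (fun a => cInt r t a / t))

noncomputable def Ffun (lam : ℝ) (r : ℝ → A → ℝ) (t : ℝ) : ℝ :=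
  lam * (t * Real.log (∑ a, Real.exp (cInt r t a / t / lam)))

variable {r : ℝ → A → ℝ}

lemma cInt_hasDeriv (hrcont : ∀ a, Continuous (fun s => r s a)) (a : A) (t : ℝ) : HasDerivAt (fun u => cInt r u a) (r t a) t :=
  intervalIntegral.integral_hasDerivAt_right ((hrcont a).intervalIntegrable 0 t)
    ((hrcont a).stronglyMeasurableAtFilter _ _) (hrcont a).continuousAt

lemma cInt_continuous (hrcont : ∀ a, Continuous (fun s => r s a)) (a : A) : Continuous (fun u => cInt r u a) :=
  continuous_iff_continuousAt.mpr fun t => (cInt_hasDeriv hrcont a t).continuousAt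

lemma deriv_identity (lam t : ℝ) (hlam : 0 < lam) (ht : 0 < t) (c ρ : A → ℝ) :
    lam * (1 * Real.log (∑ a, Real.exp (c a / t / lam)) +
      t * ((∑ a, Real.exp (c a / t / lam) * ((ρ a * t - c a * 1) / t ^ 2 / lam)) /
        (∑ a, Real.exp (c a / t / lam))))
    = ∑ a, sm lam (fun a => c a / t) a * ρ a + lam * entropy (sm lam (fun a => c a / t)) := by
  have hS : 0 < ∑ a, Real.exp (c a / t / lam) := Spos lam (fun a => c a / t)
  have hv := val_sm lam hlam (fun a => c a / t)
  unfold val at hv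
  have hent : lam * entropy (sm lam (fun a => c a / t))
      = lam * Real.log (∑ a, Real.exp (c a / t / lam))
        - ∑ a, sm lam (fun a => c a / t) a * (c a / t) := by linarith
  rw [hent]
  have hkey : lam * (t * ((∑ a, Real.exp (c a / t / lam) * ((ρ a * t - c a * 1) / t ^ 2 / lam)) /
        (∑ a, Real.exp (c a / t / lam))))
      = ∑ a, (sm lam (fun a => c a / t) a * ρ a - sm lam (fun a => c a / t) a * (c a / t)) := by
    rw [Finset.sum_div, Finset.mul_sum, Finset.mul_sum]
    refine Finset.sum_congr rfl (fun a _ => ?_)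
    unfold sm
    field_simp
  rw [Finset.sum_sub_distrib] at hkey
  linarith

lemma Ffun_hasDeriv (hrcont : ∀ a, Continuous (fun s => r s a)) (lam : ℝ) (hlam : 0 < lam) {t : ℝ} (ht : 0 < t) :
    HasDerivAt (Ffun lam r) (gfun lam r t) t := by
  have hS : 0 < ∑ a, Real.exp (cInt r t a / t / lam) := Spos lam (fun a => cInt r t a / t)
  have hsum : HasDerivAt (fun u => ∑ a, Real.exp (cInt r u a / u / lam))
      (∑ a, Real.exp (cInt r t a / t / lam) * ((r t a * t - cInt r t a * 1) / t ^ 2 / lam)) t := by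
    refine HasDerivAt.fun_sum (fun a _ => ?_)
    exact (((cInt_hasDeriv hrcont a t).div (hasDerivAt_id t) ht.ne').div_const lam).exp
  have hlog := hsum.log hS.ne'
  have hmul := ((hasDerivAt_id t).mul hlog).const_mul lam
  simp only [id_eq] at hmul
  have hid := deriv_identity lam t hlam ht (fun a => cInt r t a) (fun a => r t a)
  unfold Ffun gfun
  rw [← hid]
  exact hmul

end Deriv

section Glue
variable {A : Type*} [Fintype A] [Nonempty A] {r : ℝ → A → ℝ}

lemma integral_eval (hrcont : ∀ a, Continuous (fun s => r s a)) (lam t : ℝ) (p : A → ℝ) :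
    (∫ s in (0:ℝ)..t, ((∑ a, p a * r s a) + lam * entropy p))
      = (∑ a, p a * cInt r t a) + t * (lam * entropy p) := by
  have h1 : IntervalIntegrable (fun s => ∑ a, p a * r s a) volume 0 t :=
    (continuous_finset_sum _ fun a _ => continuous_const.mul (hrcont a)).intervalIntegrable 0 t
  rw [intervalIntegral.integral_add h1 intervalIntegrable_const,
    intervalIntegral.integral_finset_sum (f := fun a s => p a * r s a)
      (fun a _ => (continuous_const.mul (hrcont a)).intervalIntegrable 0 t),
    intervalIntegral.integral_const]
  simp only [intervalIntegral.integral_const_mul, smul_eq_mul, sub_zero, cInt]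

variable {b : ℝ → A → ℝ} {lam : ℝ}

lemma b_eq_sm (hlam : 0 < lam) (hbdist : ∀ t, IsDist (b t))
    (hbr : ∀ t ≥ (1:ℝ), ∀ p : A → ℝ, IsDist p →
      (∑ a, p a * ((1/t) * ∫ s in (0:ℝ)..t, r s a)) + lam * entropy p ≤
      (∑ a, b t a * ((1/t) * ∫ s in (0:ℝ)..t, r s a)) + lam * entropy (b t))
    {t : ℝ} (ht : 1 ≤ t) : b t = sm lam (fun a => cInt r t a / t) := by
  have h := hbr t ht (sm lam (fun a => cInt r t a / t)) (sm_dist _ _)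
  have e : ∀ (p : A → ℝ), (∑ a, p a * ((1/t) * ∫ s in (0:ℝ)..t, r s a))
      = ∑ a, p a * (cInt r t a / t) :=
    fun p => Finset.sum_congr rfl fun a _ => by rw [cInt]; ring
  rw [e (sm lam (fun a => cInt r t a / t)), e (b t)] at h
  exact eq_sm_of_max lam hlam _ (hbdist t) h

lemma sSup_eval (hrcont : ∀ a, Continuous (fun s => r s a)) (hlam : 0 < lam)
    (hbdist : ∀ t, IsDist (b t))
    (hbr : ∀ t ≥ (1:ℝ), ∀ p : A → ℝ, IsDist p →
      (∑ a, p a * ((1/t) * ∫ s in (0:ℝ)..t, r s a)) + lam * entropy p ≤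
      (∑ a, b t a * ((1/t) * ∫ s in (0:ℝ)..t, r s a)) + lam * entropy (b t))
    {t : ℝ} (ht : 1 ≤ t) :
    sSup {x : ℝ | ∃ p : A → ℝ, IsDist p ∧
        x = ∫ s in (0:ℝ)..t, ((∑ a, p a * r s a) + lam * entropy p)}
      = Ffun lam r t := by
  have ht0 : (0:ℝ) < t := lt_of_lt_of_le one_pos ht
  have e2 : ∀ (p : A → ℝ), (∑ a, p a * cInt r t a) + t * (lam * entropy p)
      = t * ((∑ a, p a * ((1/t) * ∫ s in (0:ℝ)..t, r s a)) + lam * entropy p) := by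
    intro p
    rw [mul_add, Finset.mul_sum]
    congr 1
    exact Finset.sum_congr rfl fun a _ => by rw [cInt]; field_simp
  have hgt : IsGreatest {x : ℝ | ∃ p : A → ℝ, IsDist p ∧
      x = ∫ s in (0:ℝ)..t, ((∑ a, p a * r s a) + lam * entropy p)}
      (∫ s in (0:ℝ)..t, ((∑ a, b t a * r s a) + lam * entropy (b t))) := by
    constructor
    · exact ⟨b t, hbdist t, rfl⟩
    · rintro x ⟨p, hp, rfl⟩
      rw [integral_eval hrcont, integral_eval hrcont, e2 p, e2 (b t)]
      exact mul_le_mul_of_nonneg_left (hbr t ht p hp) ht0.le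
  rw [hgt.csSup_eq, integral_eval hrcont, b_eq_sm hlam hbdist hbr ht]
  have hv := val_sm lam hlam (fun a => cInt r t a / t)
  unfold val at hv
  simp only [] at hv
  have e3 : (∑ a, sm lam (fun a => cInt r t a / t) a * cInt r t a)
      = t * ∑ a, sm lam (fun a => cInt r t a / t) a * (cInt r t a / t) := by
    rw [Finset.mul_sum]
    exact Finset.sum_congr rfl fun a _ => by field_simp
  rw [e3]
  unfold Ffun
  linear_combination (t : ℝ) * hv

lemma gfun_continuousOn (hrcont : ∀ a, Continuous (fun s => r s a)) (hlam : 0 < lam) :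
    ContinuousOn (gfun lam r) {t : ℝ | 0 < t} := by
  have hc : ∀ a, ContinuousOn (fun t => cInt r t a / t / lam) {t : ℝ | 0 < t} := fun a =>
    ((cInt_continuous hrcont a).continuousOn.div continuousOn_id
      (fun t ht => ne_of_gt ht)).div_const lam
  have he : ∀ a, ContinuousOn (fun t => Real.exp (cInt r t a / t / lam)) {t : ℝ | 0 < t} :=
    fun a => Real.continuous_exp.comp_continuousOn (hc a)
  have hS : ContinuousOn (fun t => ∑ a, Real.exp (cInt r t a / t / lam)) {t : ℝ | 0 < t} :=
    continuousOn_finset_sum _ fun a _ => he a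
  have hq : ∀ a, ContinuousOn (fun t => sm lam (fun a => cInt r t a / t) a) {t : ℝ | 0 < t} :=
    fun a => (he a).div hS (fun t _ => (Spos lam (fun a => cInt r t a / t)).ne')
  have hlog : ∀ a, ContinuousOn
      (fun t => Real.log (sm lam (fun a => cInt r t a / t) a)) {t : ℝ | 0 < t} :=
    fun a => (hq a).log (fun t _ => (sm_pos lam (fun a => cInt r t a / t) a).ne')
  unfold gfun entropy
  exact (continuousOn_finset_sum _ fun a _ => (hq a).mul (hrcont a).continuousOn).add
    (continuousOn_const.mul ((continuousOn_finset_sum _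
      fun a _ => (hq a).mul (hlog a)).neg))

lemma phib_intervalIntegrable (hrcont : ∀ a, Continuous (fun s => r s a))
    (hrbdd : ∃ M : ℝ, ∀ s a, |r s a| ≤ M) (hlam : 0 < lam)
    (hbmeas : ∀ a, Measurable (fun s => b s a)) (hbdist : ∀ t, IsDist (b t)) (x y : ℝ) :
    IntervalIntegrable (fun s => (∑ a, b s a * r s a) + lam * entropy (b s)) volume x y := by
  obtain ⟨M, hM⟩ := hrbdd
  have hb01 : ∀ s a, 0 ≤ b s a ∧ b s a ≤ 1 := by
    intro s a
    refine ⟨(hbdist s).1 a, ?_⟩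
    have h1 := Finset.single_le_sum (f := b s) (fun i _ => (hbdist s).1 i) (Finset.mem_univ a)
    rw [(hbdist s).2] at h1
    exact h1
  have hxlogx : ∀ x : ℝ, 0 ≤ x → x ≤ 1 → |x * Real.log x| ≤ 1 := by
    intro x hx0 hx1
    rcases eq_or_lt_of_le hx0 with h | h
    · simp [← h]
    · have hlog : Real.log x ≤ 0 := Real.log_nonpos hx0 hx1
      have h1 : x * Real.log x ≤ 0 := mul_nonpos_iff.mpr (Or.inl ⟨hx0, hlog⟩)
      rw [abs_of_nonpos h1, neg_le]
      have h2 : Real.log x⁻¹ ≤ x⁻¹ - 1 := Real.log_le_sub_one_of_pos (inv_pos.mpr h)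
      rw [Real.log_inv] at h2
      nlinarith [mul_le_mul_of_nonneg_left h2 hx0, mul_inv_cancel₀ h.ne']
  have hmeas : Measurable (fun s => (∑ a, b s a * r s a) + lam * entropy (b s)) := by
    unfold entropy
    exact (Finset.measurable_sum _ fun a _ => (hbmeas a).mul (hrcont a).measurable).add
      (measurable_const.mul ((Finset.measurable_sum _ fun a _ =>
        (hbmeas a).mul (Real.measurable_log.comp (hbmeas a))).neg))
  rw [intervalIntegrable_iff]
  show IntegrableOn _ (Set.Ioc (min x y) (max x y)) _
  refine ⟨hmeas.aestronglyMeasurable, ?_⟩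
  refine MeasureTheory.HasFiniteIntegral.of_bounded
    (C := (Fintype.card A : ℝ) * M + lam * (Fintype.card A : ℝ)) (ae_of_all _ fun s => ?_)
  have hMpos : 0 ≤ M := le_trans (abs_nonneg _) (hM s (Classical.arbitrary A))
  have h1 : |∑ a, b s a * r s a| ≤ (Fintype.card A : ℝ) * M := by
    calc |∑ a, b s a * r s a| ≤ ∑ a, |b s a * r s a| := Finset.abs_sum_le_sum_abs _ _
      _ ≤ ∑ _a : A, M := by
          refine Finset.sum_le_sum fun a _ => ?_
          rw [abs_mul]
          calc |b s a| * |r s a| ≤ 1 * M := by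
                refine mul_le_mul ?_ (hM s a) (abs_nonneg _) zero_le_one
                rw [abs_of_nonneg (hb01 s a).1]; exact (hb01 s a).2
            _ = M := one_mul M
      _ = (Fintype.card A : ℝ) * M := by rw [Finset.sum_const, Finset.card_univ, nsmul_eq_mul]
  have h2 : |entropy (b s)| ≤ (Fintype.card A : ℝ) := by
    unfold entropy
    rw [abs_neg]
    calc |∑ a, b s a * Real.log (b s a)| ≤ ∑ a, |b s a * Real.log (b s a)| :=
          Finset.abs_sum_le_sum_abs _ _
      _ ≤ ∑ _a : A, (1:ℝ) :=
          Finset.sum_le_sum fun a _ => hxlogx _ (hb01 s a).1 (hb01 s a).2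
      _ = (Fintype.card A : ℝ) := by
          rw [Finset.sum_const, Finset.card_univ, nsmul_eq_mul, mul_one]
  calc ‖(∑ a, b s a * r s a) + lam * entropy (b s)‖
      ≤ |∑ a, b s a * r s a| + |lam * entropy (b s)| := abs_add_le _ _
    _ ≤ (Fintype.card A : ℝ) * M + lam * (Fintype.card A : ℝ) := by
        rw [abs_mul, abs_of_pos hlam]
        exact add_le_add h1 (mul_le_mul_of_nonneg_left h2 hlam.le)

end Glue

/-- Continuous-time stochastic fictitious play has O(1) regret with respect to the
entropy-regularized payoffs: for every `T ≥ 1`, the regularized regret over `[0, T]`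
equals the regularized regret over `[0, 1]`, a quantity independent of `T`. -/
theorem csfp_bounded_regularized_regret {A : Type*} [Fintype A] [Nonempty A]
    (r : ℝ → A → ℝ)
    (hrcont : ∀ a, Continuous (fun s => r s a))
    (hrbdd : ∃ M : ℝ, ∀ s a, |r s a| ≤ M)
    (lam : ℝ) (hlam : 0 < lam)
    (b : ℝ → A → ℝ)
    (hbmeas : ∀ a, Measurable (fun s => b s a))
    (hbdist : ∀ t, IsDist (b t))
    (hbr : ∀ t ≥ (1:ℝ), ∀ p : A → ℝ, IsDist p →
      (∑ a, p a * ((1/t) * ∫ s in (0:ℝ)..t, r s a)) + lam * entropy p ≤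
      (∑ a, b t a * ((1/t) * ∫ s in (0:ℝ)..t, r s a)) + lam * entropy (b t)) :
    ∀ T ≥ (1:ℝ),
      sSup {x : ℝ | ∃ p : A → ℝ, IsDist p ∧
          x = ∫ s in (0:ℝ)..T, ((∑ a, p a * r s a) + lam * entropy p)}
        - (∫ s in (0:ℝ)..T, ((∑ a, b s a * r s a) + lam * entropy (b s)))
      = sSup {x : ℝ | ∃ p : A → ℝ, IsDist p ∧
          x = ∫ s in (0:ℝ)..(1:ℝ), ((∑ a, p a * r s a) + lam * entropy p)}
        - (∫ s in (0:ℝ)..(1:ℝ), ((∑ a, b s a * r s a) + lam * entropy (b s))) := by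
  intro T hT
  rw [sSup_eval hrcont hlam hbdist hbr hT, sSup_eval hrcont hlam hbdist hbr (le_refl 1)]
  have hint01 := phib_intervalIntegrable hrcont hrbdd hlam hbmeas hbdist 0 1
  have hint1T := phib_intervalIntegrable hrcont hrbdd hlam hbmeas hbdist 1 T
  have hsplit := intervalIntegral.integral_add_adjacent_intervals hint01 hint1T
  have hsub : Set.uIcc (1:ℝ) T ⊆ {t : ℝ | 0 < t} := by
    rw [Set.uIcc_of_le hT]
    intro s hs
    exact lt_of_lt_of_le one_pos hs.1
  have hcong : (∫ s in (1:ℝ)..T, ((∑ a, b s a * r s a) + lam * entropy (b s)))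
      = ∫ s in (1:ℝ)..T, gfun lam r s := by
    refine intervalIntegral.integral_congr fun s hs => ?_
    rw [Set.uIcc_of_le hT] at hs
    unfold gfun
    rw [← b_eq_sm hlam hbdist hbr hs.1]
  have hftc : (∫ s in (1:ℝ)..T, gfun lam r s) = Ffun lam r T - Ffun lam r 1 := by
    refine intervalIntegral.integral_eq_sub_of_hasDerivAt (fun s hs => ?_) ?_
    · exact Ffun_hasDeriv hrcont lam hlam (hsub hs)
    · exact ((gfun_continuousOn hrcont hlam).mono hsub).intervalIntegrable
  rw [hcong, hftc] at hsplit
  linarith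
end

section
/- Continuous-time stochastic fictitious play is ε-Hannan consistent with ε ≤ λ·(max_p H(p) − min_p H(p)) = λ·log|A|: under the setup of CSFP (b_t the entropy-regularized best response to the running average reward), the unregularized regret satisfies max_p ∫_0^T ⟨p, r_s⟩ ds − ∫_0^T ⟨b_s, r_s⟩ ds ≤ C + T·λ·log|A| for a constant C independent of T. -/
open Real BigOperators MeasureTheory intervalIntegral

lemma entropy_le {A : Type*} [Fintype A] [Nonempty A] (y : A → ℝ) :
    Real.log (∑ a, Real.exp (y a)) - ∑ a, softmax y a * y a ≤ Real.log (Fintype.card A) := by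
  have hSpos : 0 < ∑ a, Real.exp (y a) :=
    Finset.sum_pos (fun a _ => Real.exp_pos _) Finset.univ_nonempty
  have hn : (0:ℝ) < Fintype.card A := by exact_mod_cast Fintype.card_pos
  have hbpos : ∀ a, 0 < softmax y a := fun a => div_pos (Real.exp_pos _) hSpos
  have hbsum : ∑ a, softmax y a = 1 := by
    simp only [softmax, ← Finset.sum_div]
    exact div_self hSpos.ne'
  have hlogb : ∀ a, Real.log (softmax y a) = y a - Real.log (∑ b, Real.exp (y b)) := by
    intro a
    rw [softmax, Real.log_div (Real.exp_pos _).ne' hSpos.ne', Real.log_exp]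
  have h1 : Real.log (∑ a, Real.exp (y a)) - ∑ a, softmax y a * y a
      = -∑ a, softmax y a * Real.log (softmax y a) := by
    have : ∑ a, softmax y a * Real.log (softmax y a)
        = (∑ a, softmax y a * y a) - Real.log (∑ b, Real.exp (y b)) := by
      simp_rw [hlogb, mul_sub]
      rw [Finset.sum_sub_distrib, ← Finset.sum_mul, hbsum, one_mul]
    rw [this]; ring
  rw [h1]
  -- key: ∑ b a * log (1/(n * b a)) ≤ ∑ b a * (1/(n * b a) - 1) = 0
  have key : ∀ a, softmax y a * Real.log (1 / (Fintype.card A * softmax y a))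
      ≤ softmax y a * (1 / ((Fintype.card A:ℝ) * softmax y a) - 1) := by
    intro a
    exact mul_le_mul_of_nonneg_left
      (Real.log_le_sub_one_of_pos (div_pos one_pos (mul_pos hn (hbpos a)))) (hbpos a).le
  have hsum := Finset.sum_le_sum (fun a (_ : a ∈ Finset.univ) => key a)
  have hL : ∑ a, softmax y a * Real.log (1 / ((Fintype.card A:ℝ) * softmax y a))
      = -Real.log (Fintype.card A) - ∑ a, softmax y a * Real.log (softmax y a) := by
    have : ∀ a, softmax y a * Real.log (1 / ((Fintype.card A:ℝ) * softmax y a))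
        = -(softmax y a * Real.log (Fintype.card A)) - softmax y a * Real.log (softmax y a) := by
      intro a
      rw [one_div, Real.log_inv, Real.log_mul hn.ne' (hbpos a).ne']
      ring
    simp_rw [this]
    rw [Finset.sum_sub_distrib, Finset.sum_neg_distrib, ← Finset.sum_mul, hbsum, one_mul]
  have hR : ∑ a, softmax y a * (1 / ((Fintype.card A:ℝ) * softmax y a) - 1) = 0 := by
    have : ∀ a, softmax y a * (1 / ((Fintype.card A:ℝ) * softmax y a) - 1)
        = (Fintype.card A:ℝ)⁻¹ - softmax y a := by
      intro a; field_simp [(hbpos a).ne', hn.ne']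
    simp_rw [this]
    rw [Finset.sum_sub_distrib, hbsum, Finset.sum_const, Finset.card_univ, nsmul_eq_mul,
      mul_inv_cancel₀ hn.ne']
    ring
  rw [hL, hR] at hsum
  linarith

/-- Continuous-time stochastic fictitious play is ε-Hannan consistent with
`ε ≤ λ log |A|`: the unregularized regret over `[0, T]` is at most `C + T λ log |A|`
for some constant `C` independent of `T`. -/
theorem csfp_eps_hannan_consistent {A : Type*} [Fintype A] [Nonempty A]
    (r : ℝ → A → ℝ)
    (hrcont : ∀ a, Continuous (fun s => r s a))
    (hrbdd : ∃ M : ℝ, ∀ s a, |r s a| ≤ M)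
    (lam : ℝ) (hlam : 0 < lam)
    (b : ℝ → A → ℝ)
    (hbmeas : ∀ a, Measurable (fun s => b s a))
    (hbdist : ∀ t, IsDist (b t))
    (hb : ∀ t ≥ (1:ℝ), b t = softmax (fun a => (1 / (lam * t)) * ∫ s in (0:ℝ)..t, r s a)) :
    ∃ C : ℝ, ∀ T ≥ (1:ℝ),
      sSup {x : ℝ | ∃ p : A → ℝ, IsDist p ∧ x = ∫ s in (0:ℝ)..T, ∑ a, p a * r s a}
        - (∫ s in (0:ℝ)..T, ∑ a, b s a * r s a)
      ≤ C + T * lam * Real.log (Fintype.card A) := by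
  classical
  obtain ⟨M, hM⟩ := hrbdd
  have hM0 : 0 ≤ M := le_trans (abs_nonneg _) (hM 0 (Classical.arbitrary A))
  have hn : (0:ℝ) < Fintype.card A := by exact_mod_cast Fintype.card_pos
  have hn1 : (1:ℝ) ≤ Fintype.card A := by exact_mod_cast Fintype.card_pos
  have hlogn : 0 ≤ Real.log (Fintype.card A) := Real.log_nonneg hn1
  set Y : A → ℝ → ℝ := fun a t => ∫ s in (0:ℝ)..t, r s a with hY
  have hYd : ∀ a t, HasDerivAt (Y a) (r t a) t := by
    intro a t
    exact intervalIntegral.integral_hasDerivAt_right ((hrcont a).intervalIntegrable 0 t)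
      ((hrcont a).stronglyMeasurableAtFilter _ _) (hrcont a).continuousAt
  have hYc : ∀ a, Continuous (Y a) := fun a =>
    Differentiable.continuous (fun t => (hYd a t).differentiableAt)
  set u : ℝ → A → ℝ := fun t a => Y a t / (lam * t) with hu
  set S : ℝ → ℝ := fun t => ∑ a, Real.exp (u t a) with hS
  have hSpos : ∀ t, 0 < S t := fun t =>
    Finset.sum_pos (fun a _ => Real.exp_pos _) Finset.univ_nonempty
  set u' : A → ℝ → ℝ := fun a t => (r t a * (lam * t) - Y a t * lam) / (lam * t) ^ 2 with hu'
  set F : ℝ → ℝ := fun t => lam * t * Real.log (S t) with hF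
  set F' : ℝ → ℝ := fun t =>
    lam * Real.log (S t) + lam * t * ((∑ a, Real.exp (u t a) * u' a t) / S t) with hF'
  have hpos : ∀ t : ℝ, 1 ≤ t → 0 < lam * t := fun t ht =>
    mul_pos hlam (lt_of_lt_of_le one_pos ht)
  have hud : ∀ (a : A) (t : ℝ), 1 ≤ t → HasDerivAt (fun t => u t a) (u' a t) t := by
    intro a t ht
    have h2 : HasDerivAt (fun t : ℝ => lam * t) lam t := by
      simpa using (hasDerivAt_id t).const_mul lam
    exact (hYd a t).div h2 (hpos t ht).ne'
  have hSd : ∀ t : ℝ, 1 ≤ t → HasDerivAt S (∑ a, Real.exp (u t a) * u' a t) t := by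
    intro t ht
    exact HasDerivAt.fun_sum (fun a _ => ((hud a t ht).exp))
  have hFd : ∀ t : ℝ, 1 ≤ t → HasDerivAt F (F' t) t := by
    intro t ht
    have h1 : HasDerivAt (fun t : ℝ => lam * t) lam t := by
      simpa using (hasDerivAt_id t).const_mul lam
    have h2 : HasDerivAt (fun t => Real.log (S t))
        ((∑ a, Real.exp (u t a) * u' a t) / S t) t :=
      (hSd t ht).log (hSpos t).ne'
    exact h1.mul h2
  -- the per-time inequality F' t ≤ ⟨softmax, r⟩ + lam * log n
  have hkey : ∀ t : ℝ, 1 ≤ t →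
      F' t ≤ (∑ a, softmax (u t) a * r t a) + lam * Real.log (Fintype.card A) := by
    intro t ht
    have hlt := hpos t ht
    have hsm : ∀ a, softmax (u t) a = Real.exp (u t a) / S t := fun a => rfl
    have e1 : lam * t * ((∑ a, Real.exp (u t a) * u' a t) / S t)
        = ∑ a, softmax (u t) a * (r t a - lam * u t a) := by
      rw [Finset.sum_div, Finset.mul_sum]
      refine Finset.sum_congr rfl fun a _ => ?_
      rw [hsm]
      have h3 : lam * t * u' a t = r t a - lam * u t a := by
        simp only [hu', hu]
        field_simp [(hpos t ht).ne']
      have h4 : lam * t * (Real.exp (u t a) * u' a t / S t)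
          = Real.exp (u t a) / S t * (lam * t * u' a t) := by ring
      rw [h4, h3]
    have e2 : ∑ a, softmax (u t) a * (r t a - lam * u t a)
        = (∑ a, softmax (u t) a * r t a) - lam * ∑ a, softmax (u t) a * u t a := by
      rw [Finset.mul_sum, ← Finset.sum_sub_distrib]
      exact Finset.sum_congr rfl fun a _ => by ring
    have hent := entropy_le (u t)
    have hSrw : Real.log (S t) = Real.log (∑ a, Real.exp (u t a)) := rfl
    rw [hF']
    simp only [e1, e2]
    have : lam * (Real.log (S t) - ∑ a, softmax (u t) a * u t a)
        ≤ lam * Real.log (Fintype.card A) :=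
      mul_le_mul_of_nonneg_left (by rw [hSrw]; exact hent) hlam.le
    linarith
  -- continuity facts on [1, T]
  have hucont : ∀ a : A, ContinuousOn (fun t => u t a) {t : ℝ | 1 ≤ t} := by
    intro a
    exact (hYc a).continuousOn.div (continuous_const.mul continuous_id).continuousOn
      (fun t ht => (hpos t ht).ne')
  have hScont : ContinuousOn S {t : ℝ | 1 ≤ t} := by
    apply continuousOn_finset_sum
    intro a _
    exact Real.continuous_exp.comp_continuousOn (hucont a)
  have hu'cont : ∀ a : A, ContinuousOn (u' a) {t : ℝ | 1 ≤ t} := by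
    intro a
    apply ContinuousOn.div
    · exact (((hrcont a).continuousOn.mul
        (continuous_const.mul continuous_id).continuousOn).sub
        ((hYc a).continuousOn.mul continuousOn_const))
    · exact ((continuous_const.mul continuous_id).pow 2).continuousOn
    · intro t ht; exact pow_ne_zero 2 (hpos t ht).ne'
  have hF'cont : ContinuousOn F' {t : ℝ | 1 ≤ t} := by
    apply ContinuousOn.add
    · exact continuousOn_const.mul (hScont.log (fun t ht => (hSpos t).ne'))
    · refine (continuous_const.mul continuous_id).continuousOn.mul (ContinuousOn.div ?_ hScont
        (fun t ht => (hSpos t).ne'))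
      exact continuousOn_finset_sum _ fun a _ =>
        (Real.continuous_exp.comp_continuousOn (hucont a)).mul (hu'cont a)
  set ψ : ℝ → ℝ := fun s => ∑ a, softmax (u s) a * r s a with hψ
  have hψcont : ContinuousOn ψ {t : ℝ | 1 ≤ t} := by
    apply continuousOn_finset_sum
    intro a _
    refine ContinuousOn.mul ?_ (hrcont a).continuousOn
    exact ContinuousOn.div (Real.continuous_exp.comp_continuousOn (hucont a)) hScont
      (fun t ht => (hSpos t).ne')
  -- g = realized reward
  set g : ℝ → ℝ := fun s => ∑ a, b s a * r s a with hg
  have hgmeas : Measurable g :=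
    Finset.measurable_sum _ fun a _ => (hbmeas a).mul (hrcont a).measurable
  have hgbdd : ∀ s, |g s| ≤ M := by
    intro s
    calc |∑ a, b s a * r s a| ≤ ∑ a, |b s a * r s a| := Finset.abs_sum_le_sum_abs _ _
      _ ≤ ∑ a, b s a * M := by
          refine Finset.sum_le_sum fun a _ => ?_
          rw [abs_mul, abs_of_nonneg ((hbdist s).1 a)]
          exact mul_le_mul_of_nonneg_left (hM s a) ((hbdist s).1 a)
      _ = M := by rw [← Finset.sum_mul, (hbdist s).2, one_mul]
  have hgint : ∀ c d : ℝ, IntervalIntegrable g volume c d := by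
    intro c d
    refine (_root_.intervalIntegrable_const (c := M)).mono_fun
      hgmeas.aestronglyMeasurable.restrict (Filter.Eventually.of_forall fun s => ?_)
    simpa [Real.norm_eq_abs, abs_of_nonneg hM0] using hgbdd s
  -- per-state max bound
  refine ⟨F 1 + M, ?_⟩
  intro T hT
  have hmax : ∀ a, Y a T ≤ F T := by
    intro a
    have h1 : Y a T = lam * T * u T a := by
      simp only [hu]; field_simp
    have h2 : u T a ≤ Real.log (S T) := by
      have : Real.exp (u T a) ≤ S T :=
        Finset.single_le_sum (f := fun a => Real.exp (u T a))
          (fun a _ => (Real.exp_pos _).le) (Finset.mem_univ a)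
      calc u T a = Real.log (Real.exp (u T a)) := (Real.log_exp _).symm
        _ ≤ Real.log (S T) := Real.log_le_log (Real.exp_pos _) this
    rw [h1, hF]
    exact mul_le_mul_of_nonneg_left h2 (hpos T hT).le
  -- sSup bound
  have hsup : sSup {x : ℝ | ∃ p : A → ℝ, IsDist p ∧ x = ∫ s in (0:ℝ)..T, ∑ a, p a * r s a}
      ≤ F T := by
    apply csSup_le
    · refine ⟨∫ s in (0:ℝ)..T, ∑ a, (Fintype.card A : ℝ)⁻¹ * r s a,
        fun _ => (Fintype.card A : ℝ)⁻¹, ⟨fun a => by positivity, ?_⟩, rfl⟩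
      rw [Finset.sum_const, Finset.card_univ, nsmul_eq_mul, mul_inv_cancel₀ hn.ne']
    · rintro x ⟨p, hp, rfl⟩
      have hswap : ∫ s in (0:ℝ)..T, ∑ a, p a * r s a = ∑ a, p a * Y a T := by
        rw [intervalIntegral.integral_finset_sum (f := fun a s => p a * r s a)
          (fun a _ => ((continuous_const.mul (hrcont a) : Continuous fun s => p a * r s a)).intervalIntegrable 0 T)]
        exact Finset.sum_congr rfl fun a _ => intervalIntegral.integral_const_mul _ _
      rw [hswap]
      calc ∑ a, p a * Y a T ≤ ∑ a, p a * F T :=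
            Finset.sum_le_sum fun a _ => mul_le_mul_of_nonneg_left (hmax a) (hp.1 a)
        _ = F T := by rw [← Finset.sum_mul, hp.2, one_mul]
  -- FTC
  have huIcc : Set.uIcc (1:ℝ) T = Set.Icc 1 T := Set.uIcc_of_le hT
  have hsub : Set.Icc (1:ℝ) T ⊆ {t : ℝ | 1 ≤ t} := fun t ht => ht.1
  have hF'int : IntervalIntegrable F' volume 1 T := by
    apply ContinuousOn.intervalIntegrable
    rw [huIcc]; exact hF'cont.mono hsub
  have hψint : IntervalIntegrable ψ volume 1 T := by
    apply ContinuousOn.intervalIntegrable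
    rw [huIcc]; exact hψcont.mono hsub
  have hFTC : F T - F 1 = ∫ s in (1:ℝ)..T, F' s := by
    refine (intervalIntegral.integral_eq_sub_of_hasDerivAt ?_ hF'int).symm
    intro t ht
    rw [huIcc] at ht
    exact hFd t ht.1
  have hmono : (∫ s in (1:ℝ)..T, F' s)
      ≤ ∫ s in (1:ℝ)..T, (ψ s + lam * Real.log (Fintype.card A)) := by
    apply intervalIntegral.integral_mono_on hT hF'int
      (hψint.add _root_.intervalIntegrable_const)
    intro s hs
    exact hkey s hs.1
  have hconst : (∫ s in (1:ℝ)..T, (ψ s + lam * Real.log (Fintype.card A)))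
      = (∫ s in (1:ℝ)..T, ψ s) + (T - 1) * (lam * Real.log (Fintype.card A)) := by
    rw [intervalIntegral.integral_add hψint _root_.intervalIntegrable_const,
      intervalIntegral.integral_const, smul_eq_mul]
  have hψg : (∫ s in (1:ℝ)..T, ψ s) = ∫ s in (1:ℝ)..T, g s := by
    apply intervalIntegral.integral_congr
    intro s hs
    rw [huIcc] at hs
    show (∑ a, softmax (u s) a * r s a) = ∑ a, b s a * r s a
    rw [hb s hs.1]
    refine Finset.sum_congr rfl fun a _ => ?_
    congr 1
    show softmax (u s) a = softmax (fun a => (1 / (lam * s)) * Y a s) a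
    congr 1
    funext a'
    simp only [hu, one_div_mul_eq_div]
  have hsplit : (∫ s in (0:ℝ)..1, g s) + (∫ s in (1:ℝ)..T, g s) = ∫ s in (0:ℝ)..T, g s :=
    intervalIntegral.integral_add_adjacent_intervals (hgint 0 1) (hgint 1 T)
  have h01 : -M ≤ ∫ s in (0:ℝ)..1, g s := by
    have := intervalIntegral.norm_integral_le_of_norm_le_const
      (C := M) (f := g) (a := (0:ℝ)) (b := 1) (fun s _ => by
        simpa [Real.norm_eq_abs] using hgbdd s)
    rw [Real.norm_eq_abs] at this
    have h2 : |∫ s in (0:ℝ)..1, g s| ≤ M := by simpa using this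
    linarith [(abs_le.mp h2).1]
  -- assemble
  have hTineq : (T - 1) * (lam * Real.log (Fintype.card A))
      ≤ T * lam * Real.log (Fintype.card A) := by
    have : (T - 1) ≤ T := by linarith
    have := mul_le_mul_of_nonneg_right this (mul_nonneg hlam.le hlogn)
    linarith [this]
  have : F T ≤ F 1 + (∫ s in (1:ℝ)..T, g s) + (T - 1) * (lam * Real.log (Fintype.card A)) := by
    have := hFTC
    rw [← hψg]
    linarith [hmono, hconst.le, hconst.ge]
  linarith [hsup, hsplit, h01, hTineq, this]
end
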